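/- Let u_0, …, u_N be points of ℝ^n whose affine span is all of ℝ^n, and define f : ℝ^n → ℝ by f(x) = log( Σ_{i=0}^N exp(2⟨u_i, x⟩) ). Then the map g : ℝ^n → ℝ^n given by g(x) = (1/2)∇f(x) = Σ_{i=0}^N u_i · exp(2⟨u_i,x⟩)/Σ_{j=0}^N exp(2⟨u_j,x⟩) is injective, and its range is exactly the interior of the convex hull of {u_0, …, u_N}. -/

import Mathlib

open Real MeasureTheory RealInnerProductSpace

section St2Aux

open Finset

lemma st2_double_sum {ι : Type*} [Fintype ι] (c b e : ι → ℝ) :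
    ∑ i, ∑ j, c i * c j * ((b i - b j) * (e i - e j)) =
      2 * ((∑ i, c i * e i * b i) * (∑ i, c i) - (∑ i, c i * b i) * (∑ i, c i * e i)) := by
  have h : ∀ i j : ι, c i * c j * ((b i - b j) * (e i - e j)) =
      (c i * e i * b i) * c j - (c i * b i) * (c j * e j)
        - (c i * e i) * (c j * b j) + c i * (c j * e j * b j) := by
    intro i j; ring
  simp_rw [h, Finset.sum_add_distrib, Finset.sum_sub_distrib, ← Finset.mul_sum,
    ← Finset.sum_mul]
  ring

lemma st2_sum_pos {ι : Type*} [Fintype ι] {c b : ι → ℝ} (hc : ∀ i, 0 < c i)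
    {i0 j0 : ι} (hne : b i0 ≠ b j0) :
    0 < ∑ i, ∑ j, c i * c j * ((b i - b j) * (Real.exp (2 * b i) - Real.exp (2 * b j))) := by
  have key : ∀ i j : ι, 0 ≤ (b i - b j) * (Real.exp (2 * b i) - Real.exp (2 * b j)) := by
    intro i j
    rcases le_total (b i) (b j) with h | h
    · exact mul_nonneg_of_nonpos_of_nonpos (by linarith)
        (by simp [sub_nonpos, Real.exp_le_exp]; linarith)
    · exact mul_nonneg (by linarith) (by simp [sub_nonneg, Real.exp_le_exp]; linarith)
  have keystrict : 0 < (b i0 - b j0) * (Real.exp (2 * b i0) - Real.exp (2 * b j0)) := by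
    rcases lt_or_gt_of_ne hne with h | h
    · exact mul_pos_of_neg_of_neg (by linarith)
        (by simp [sub_neg, Real.exp_lt_exp]; linarith)
    · exact mul_pos (by linarith) (by simp [sub_pos, Real.exp_lt_exp]; linarith)
  have hterm : ∀ i j : ι, 0 ≤ c i * c j * ((b i - b j) * (Real.exp (2 * b i) - Real.exp (2 * b j))) :=
    fun i j => mul_nonneg (mul_nonneg (hc i).le (hc j).le) (key i j)
  refine Finset.sum_pos' (fun i _ => Finset.sum_nonneg fun j _ => hterm i j) ⟨i0, mem_univ _, ?_⟩
  refine Finset.sum_pos' (fun j _ => hterm i0 j) ⟨j0, mem_univ _, ?_⟩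
  exact mul_pos (mul_pos (hc i0) (hc j0)) keystrict

lemma st2_exists_ne {E : Type*} [NormedAddCommGroup E] [InnerProductSpace ℝ E]
    {ι : Type*} [Fintype ι] (u : ι → E)
    (hspan : affineSpan ℝ (Set.range u) = ⊤) {v : E} (hv : v ≠ 0) :
    ∃ i j, ⟪u i, v⟫ ≠ ⟪u j, v⟫ := by
  by_contra h
  push_neg at h
  have hvs : vectorSpan ℝ (Set.range u) = ⊤ :=
    AffineSubspace.vectorSpan_eq_top_of_affineSpan_eq_top ℝ E E hspan
  have hle : vectorSpan ℝ (Set.range u) ≤ (ℝ ∙ v)ᗮ := by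
    rw [vectorSpan_def]
    rw [Submodule.span_le]
    rintro x hx
    rw [Set.mem_vsub] at hx
    obtain ⟨a, ⟨i, rfl⟩, b, ⟨j, rfl⟩, rfl⟩ := hx
    rw [SetLike.mem_coe, Submodule.mem_orthogonal]
    intro w hw
    obtain ⟨r, rfl⟩ := Submodule.mem_span_singleton.1 hw
    rw [vsub_eq_sub, real_inner_smul_left, real_inner_comm, inner_sub_left, h i j, sub_self, mul_zero]
  rw [hvs, top_le_iff] at hle
  have hvmem : v ∈ (ℝ ∙ v)ᗮ := hle ▸ Submodule.mem_top
  have := (Submodule.mem_orthogonal _ _).1 hvmem v (Submodule.mem_span_singleton_self v)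
  exact hv (inner_self_eq_zero.1 this)

lemma st2_mono {E : Type*} [NormedAddCommGroup E] [InnerProductSpace ℝ E]
    {ι : Type*} [Fintype ι] [Nonempty ι] (u : ι → E)
    (hspan : affineSpan ℝ (Set.range u) = ⊤) {x y : E} (hxy : x ≠ y) :
    0 < (∑ i, Real.exp (2 * ⟪u i, x⟫) * ⟪u i, x - y⟫) / (∑ i, Real.exp (2 * ⟪u i, x⟫))
      - (∑ i, Real.exp (2 * ⟪u i, y⟫) * ⟪u i, x - y⟫) / (∑ i, Real.exp (2 * ⟪u i, y⟫)) := by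
  set v := x - y with hv
  have hv0 : v ≠ 0 := sub_ne_zero.2 hxy
  set b : ι → ℝ := fun i => ⟪u i, v⟫ with hb
  set c : ι → ℝ := fun i => Real.exp (2 * ⟪u i, y⟫) with hc
  have hcpos : ∀ i, 0 < c i := fun i => Real.exp_pos _
  have hx' : ∀ i, Real.exp (2 * ⟪u i, x⟫) = c i * Real.exp (2 * b i) := by
    intro i
    rw [hc, hb, ← Real.exp_add]
    congr 1
    have : ⟪u i, x⟫ = ⟪u i, y⟫ + ⟪u i, v⟫ := by
      rw [hv, inner_sub_right]; ring
    rw [this]; ring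
  simp_rw [hx']
  have hC : 0 < ∑ i, c i := Finset.sum_pos (fun i _ => hcpos i) univ_nonempty
  have hA : 0 < ∑ i, c i * Real.exp (2 * b i) :=
    Finset.sum_pos (fun i _ => mul_pos (hcpos i) (Real.exp_pos _)) univ_nonempty
  obtain ⟨i0, j0, hne⟩ := st2_exists_ne u hspan hv0
  have hD := st2_sum_pos hcpos (b := b) (i0 := i0) (j0 := j0) hne
  have hid := st2_double_sum c b (fun i => Real.exp (2 * b i))
  rw [sub_pos, div_lt_div_iff₀ hC hA]
  simp only [hb] at *
  nlinarith [hD, hid]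

lemma st2_mem_interior {E : Type*} [NormedAddCommGroup E] [InnerProductSpace ℝ E]
    [FiniteDimensional ℝ E] {ι : Type*} [Fintype ι] [Nonempty ι] [DecidableEq ι] (u : ι → E)
    (hspan : affineSpan ℝ (Set.range u) = ⊤) (w : ι → ℝ) (hw : ∀ i, 0 < w i)
    (hw1 : ∑ i, w i = 1) :
    ∑ i, w i • u i ∈ interior (convexHull ℝ (Set.range u)) := by
  obtain ⟨y, hy⟩ : (interior (convexHull ℝ (Set.range u))).Nonempty :=
    interior_convexHull_nonempty_iff_affineSpan_eq_top.2 hspan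
  have hyc : y ∈ convexHull ℝ (Set.range u) := interior_subset hy
  rw [convexHull_range_eq_exists_affineCombination] at hyc
  obtain ⟨s, η, hη0, hη1, hyeq⟩ := hyc
  set η' : ι → ℝ := fun i => if i ∈ s then η i else 0 with hη'
  have hη'0 : ∀ i, 0 ≤ η' i := by
    intro i; simp only [hη']; split
    · exact hη0 _ ‹_›
    · exact le_rfl
  have hη'sum : ∑ i, η' i = 1 := by
    simp only [hη', Finset.sum_ite_mem, Finset.univ_inter, hη1]
  have hyrep : y = ∑ i, η' i • u i := by
    rw [← hyeq, s.affineCombination_eq_linear_combination u η hη1]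
    symm
    calc ∑ i, η' i • u i = ∑ i, (if i ∈ s then η i • u i else 0) := by
          refine Finset.sum_congr rfl fun i _ => ?_
          simp only [hη']; split <;> simp
      _ = ∑ i ∈ Finset.univ ∩ s, η i • u i := Finset.sum_ite_mem _ _ _
      _ = ∑ i ∈ s, η i • u i := by rw [Finset.univ_inter]
  have hη'le1 : ∀ i, η' i ≤ 1 := by
    intro i
    rw [← hη'sum]
    exact Finset.single_le_sum (fun j _ => hη'0 j) (Finset.mem_univ i)
  set δ : ℝ := (Finset.univ.inf' Finset.univ_nonempty w) / 2 with hδ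
  have hδpos : 0 < δ := by
    apply div_pos _ two_pos
    rw [Finset.lt_inf'_iff]
    exact fun i _ => hw i
  have hinfpos : 0 < Finset.univ.inf' Finset.univ_nonempty w := by linarith [hδ ▸ hδpos]
  have hδle : ∀ i, δ ≤ w i := by
    intro i
    calc δ ≤ Finset.univ.inf' Finset.univ_nonempty w := by rw [hδ]; linarith
      _ ≤ w i := Finset.inf'_le w (Finset.mem_univ i)
  have hδlt1 : δ < 1 := by
    have h1 : Finset.univ.inf' Finset.univ_nonempty w ≤ 1 := by
      obtain ⟨i⟩ := ‹Nonempty ι›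
      calc Finset.univ.inf' Finset.univ_nonempty w ≤ w i := Finset.inf'_le w (Finset.mem_univ i)
        _ ≤ 1 := hw1 ▸ Finset.single_le_sum (fun j _ => (hw j).le) (Finset.mem_univ i)
    rw [hδ]; linarith
  set cf : ι → ℝ := fun i => (w i - δ * η' i) / (1 - δ) with hcf
  have hcf0 : ∀ i, 0 ≤ cf i := by
    intro i
    apply div_nonneg _ (by linarith)
    have : δ * η' i ≤ δ * 1 := by
      apply mul_le_mul_of_nonneg_left (hη'le1 i) hδpos.le
    nlinarith [hδle i]
  have hcfsum : ∑ i, cf i = 1 := by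
    simp only [hcf]
    rw [← Finset.sum_div, Finset.sum_sub_distrib, hw1, ← Finset.mul_sum, hη'sum, mul_one]
    exact div_self (by linarith)
  have hp : ∑ i, cf i • u i ∈ convexHull ℝ (Set.range u) := by
    have := Finset.centerMass_mem_convexHull Finset.univ (fun i _ => hcf0 i)
      (by rw [hcfsum]; exact one_pos) (fun i _ => Set.mem_range_self i (f := u))
    rwa [Finset.centerMass_eq_of_sum_1 _ _ hcfsum] at this
  have hcombo : ∑ i, w i • u i = δ • y + (1 - δ) • (∑ i, cf i • u i) := by
    rw [hyrep, Finset.smul_sum, Finset.smul_sum, ← Finset.sum_add_distrib]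
    congr 1; ext i
    rw [smul_smul, smul_smul, ← add_smul]
    congr 1
    symm
    show δ * η' i + (1 - δ) * cf i = w i
    rw [hcf]
    show δ * η' i + (1 - δ) * ((w i - δ * η' i) / (1 - δ)) = w i
    rw [mul_comm (1 - δ), div_mul_cancel₀ _ (by linarith : (1:ℝ) - δ ≠ 0)]
    ring
  rw [hcombo]
  exact (convex_convexHull ℝ _).combo_interior_self_mem_interior hy hp hδpos
    (by linarith) (by ring)

lemma st2_exists_le {E : Type*} [NormedAddCommGroup E] [InnerProductSpace ℝ E]
    {ι : Type*} [Fintype ι] (u : ι → E) {z : E}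
    (hz : z ∈ convexHull ℝ (Set.range u)) (x : E) : ∃ i, ⟪z, x⟫ ≤ ⟪u i, x⟫ := by
  rw [convexHull_range_eq_exists_affineCombination] at hz
  obtain ⟨s, η, hη0, hη1, hzeq⟩ := hz
  by_contra h
  push_neg at h
  have hzx : ⟪z, x⟫ = ∑ i ∈ s, η i * ⟪u i, x⟫ := by
    rw [← hzeq, s.affineCombination_eq_linear_combination u η hη1, sum_inner]
    exact Finset.sum_congr rfl fun i _ => real_inner_smul_left _ _ _
  obtain ⟨i0, hi0, hi0pos⟩ : ∃ i ∈ s, 0 < η i := by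
    by_contra hc
    push_neg at hc
    have : ∑ i ∈ s, η i = 0 :=
      le_antisymm (Finset.sum_nonpos fun i hi => hc i hi) (Finset.sum_nonneg hη0)
    rw [hη1] at this; norm_num at this
  have hlt : ∑ i ∈ s, η i * ⟪u i, x⟫ < ∑ i ∈ s, η i * ⟪z, x⟫ := by
    refine Finset.sum_lt_sum (fun i hi => mul_le_mul_of_nonneg_left (h i).le (hη0 i hi))
      ⟨i0, hi0, mul_lt_mul_of_pos_left (h i0) hi0pos⟩
  rw [← Finset.sum_mul, hη1, one_mul, ← hzx] at hlt
  exact lt_irrefl _ hlt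

lemma st2_surj {E : Type*} [NormedAddCommGroup E] [InnerProductSpace ℝ E]
    [FiniteDimensional ℝ E] {ι : Type*} [Fintype ι] [Nonempty ι] (u : ι → E)
    {w : E} (hw : w ∈ interior (convexHull ℝ (Set.range u))) :
    ∃ x, ∑ i, (Real.exp (2 * ⟪u i, x⟫) / ∑ j, Real.exp (2 * ⟪u j, x⟫)) • u i = w := by
  obtain ⟨ε, hε, hball⟩ := Metric.mem_nhds_iff.1 (mem_interior_iff_mem_nhds.1 hw)
  set F : E → ℝ := fun x => Real.log (∑ i, Real.exp (2 * ⟪u i, x⟫)) - 2 * ⟪w, x⟫ with hF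
  have hSpos : ∀ x : E, 0 < ∑ i, Real.exp (2 * ⟪u i, x⟫) :=
    fun x => Finset.sum_pos (fun i _ => Real.exp_pos _) univ_nonempty
  have hFc : Continuous F := by
    apply Continuous.sub
    · apply Continuous.log
      · exact continuous_finset_sum _ fun i _ =>
          (Real.continuous_exp.comp (continuous_const.mul (continuous_const.inner continuous_id)))
      · exact fun x => (hSpos x).ne'
    · exact continuous_const.mul (continuous_const.inner continuous_id)
  have hcoer : ∀ x : E, ε / 2 * ‖x‖ ≤ F x := by
    intro x
    rcases eq_or_ne x 0 with rfl | hx0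
    · simp only [hF, norm_zero, mul_zero, inner_zero_right, sub_zero]
      apply Real.log_nonneg
      have h1 : (1 : ℝ) ≤ ∑ i : ι, (1 : ℝ) := by
        rw [Finset.sum_const, nsmul_eq_mul, mul_one]
        exact_mod_cast Finset.card_pos.2 univ_nonempty
      calc (1:ℝ) ≤ ∑ i : ι, (1:ℝ) := h1
        _ ≤ _ := Finset.sum_le_sum fun i _ => by simp
    · set z : E := w + (ε / 2 * ‖x‖⁻¹) • x with hzdef
      have hzball : z ∈ Metric.ball w ε := by
        rw [Metric.mem_ball, dist_eq_norm, hzdef, add_sub_cancel_left, norm_smul]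
        rw [Real.norm_eq_abs, abs_of_pos (mul_pos (by positivity) (inv_pos.2 (norm_pos_iff.2 hx0)))]
        rw [mul_assoc, inv_mul_cancel₀ (norm_ne_zero_iff.2 hx0), mul_one]
        linarith
      obtain ⟨i, hi⟩ := st2_exists_le u (hball hzball) x
      have hxn : ‖x‖ ≠ 0 := norm_ne_zero_iff.2 hx0
      have hzx : ⟪z, x⟫ = ⟪w, x⟫ + ε / 2 * ‖x‖ := by
        rw [hzdef, inner_add_left, real_inner_smul_left, real_inner_self_eq_norm_mul_norm]
        congr 1
        field_simp
      have hlog : 2 * ⟪u i, x⟫ ≤ Real.log (∑ j, Real.exp (2 * ⟪u j, x⟫)) := by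
        rw [Real.le_log_iff_exp_le (hSpos x)]
        exact Finset.single_le_sum (f := fun j => Real.exp (2 * ⟪u j, x⟫))
          (fun j _ => (Real.exp_pos _).le) (Finset.mem_univ i)
      have hge := hzx ▸ hi
      simp only [hF]
      have hnn : 0 ≤ ε / 2 * ‖x‖ := by positivity
      linarith [hlog, hge, hnn]
  have hlim : Filter.Tendsto F (Filter.cocompact E) Filter.atTop := by
    apply Filter.tendsto_atTop_mono hcoer
    exact (tendsto_norm_cocompact_atTop).const_mul_atTop (by positivity)
  obtain ⟨x, hxmin⟩ := hFc.exists_forall_le hlim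
  refine ⟨x, ?_⟩
  set S : ℝ := ∑ j, Real.exp (2 * ⟪u j, x⟫) with hS
  have hkey : ∀ v : E, ⟪(∑ i, (Real.exp (2 * ⟪u i, x⟫) / S) • u i) - w, v⟫ = 0 := by
    intro v
    have hfun : ∀ i : ι, (fun t : ℝ => Real.exp (2 * ⟪u i, x + t • v⟫)) =
        (fun t : ℝ => Real.exp (2 * ⟪u i, x⟫ + 2 * ⟪u i, v⟫ * t)) := by
      intro i; funext t; congr 1
      rw [inner_add_right, real_inner_smul_right]; ring
    have hSder : HasDerivAt (fun t : ℝ => ∑ i, Real.exp (2 * ⟪u i, x + t • v⟫))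
        (∑ i, Real.exp (2 * ⟪u i, x⟫) * (2 * ⟪u i, v⟫)) 0 := by
      have hterm : ∀ i ∈ Finset.univ, HasDerivAt
          (fun t : ℝ => Real.exp (2 * ⟪u i, x⟫ + 2 * ⟪u i, v⟫ * t))
          (Real.exp (2 * ⟪u i, x⟫) * (2 * ⟪u i, v⟫)) 0 := by
        intro i _
        have h1 : HasDerivAt (fun t : ℝ => 2 * ⟪u i, x⟫ + 2 * ⟪u i, v⟫ * t)
            (2 * ⟪u i, v⟫) 0 := by
          simpa using (((hasDerivAt_id (0:ℝ)).const_mul (2 * ⟪u i, v⟫)).const_add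
            (2 * ⟪u i, x⟫))
        simpa using h1.exp
      have hsum := HasDerivAt.fun_sum hterm
      have heq : (fun t : ℝ => ∑ i, Real.exp (2 * ⟪u i, x + t • v⟫)) =
          (fun t : ℝ => ∑ i, Real.exp (2 * ⟪u i, x⟫ + 2 * ⟪u i, v⟫ * t)) := by
        funext t; exact Finset.sum_congr rfl fun i _ => congrFun (hfun i) t
      rw [heq]
      exact hsum
    have hSne : (fun t : ℝ => ∑ i, Real.exp (2 * ⟪u i, x + t • v⟫)) 0 ≠ 0 := by
      simp only
      exact (hSpos _).ne'
    have hlogder := hSder.log hSne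
    have hwder : HasDerivAt (fun t : ℝ => 2 * ⟪w, x + t • v⟫) (2 * ⟪w, v⟫) 0 := by
      have heq : (fun t : ℝ => 2 * ⟪w, x + t • v⟫) =
          (fun t : ℝ => 2 * ⟪w, x⟫ + 2 * ⟪w, v⟫ * t) := by
        funext t; rw [inner_add_right, real_inner_smul_right]; ring
      rw [heq]
      simpa using (((hasDerivAt_id (0:ℝ)).const_mul (2 * ⟪w, v⟫)).const_add (2 * ⟪w, x⟫))
    have hφ : HasDerivAt (fun t : ℝ => F (x + t • v))
        ((∑ i, Real.exp (2 * ⟪u i, x⟫) * (2 * ⟪u i, v⟫)) /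
          ((fun t : ℝ => ∑ i, Real.exp (2 * ⟪u i, x + t • v⟫)) 0) - 2 * ⟪w, v⟫) 0 :=
      hlogder.sub hwder
    have hmin : IsLocalMin (fun t : ℝ => F (x + t • v)) 0 := by
      apply Filter.Eventually.of_forall
      intro t
      simpa using hxmin (x + t • v)
    have hd0 := hmin.hasDerivAt_eq_zero hφ
    have hS0 : ((fun t : ℝ => ∑ i, Real.exp (2 * ⟪u i, x + t • v⟫)) 0) = S := by
      simp [hS]
    rw [hS0] at hd0
    have hginner : ⟪(∑ i, (Real.exp (2 * ⟪u i, x⟫) / S) • u i) - w, v⟫ =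
        (∑ i, Real.exp (2 * ⟪u i, x⟫) * ⟪u i, v⟫) / S - ⟪w, v⟫ := by
      rw [inner_sub_left, sum_inner]
      simp_rw [real_inner_smul_left, div_mul_eq_mul_div]
      rw [← Finset.sum_div]
    rw [hginner]
    have h2 : (∑ i, Real.exp (2 * ⟪u i, x⟫) * (2 * ⟪u i, v⟫)) =
        2 * ∑ i, Real.exp (2 * ⟪u i, x⟫) * ⟪u i, v⟫ := by
      rw [Finset.mul_sum]; exact Finset.sum_congr rfl fun i _ => by ring
    rw [h2] at hd0
    have hSne' : S ≠ 0 := (hSpos x).ne'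
    field_simp [hSne'] at hd0 ⊢
    linarith
  have := hkey ((∑ i, (Real.exp (2 * ⟪u i, x⟫) / S) • u i) - w)
  rw [inner_self_eq_zero, sub_eq_zero] at this
  exact this

end St2Aux

/-- If the points `u 0, …, u N` affinely span `ℝⁿ`, then the map
`g = (1/2)∇f`, where `f x = log (∑ i, exp (2 ⟪u i, x⟫))`, i.e.
`g x = ∑ i, (exp (2⟪u i, x⟫) / ∑ j, exp (2⟪u j, x⟫)) • u i`, is injective and its
range is exactly the interior of the convex hull of `{u 0, …, u N}`. -/
theorem statement2 (n N : ℕ) (u : Fin (N + 1) → EuclideanSpace ℝ (Fin n))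
    (hspan : affineSpan ℝ (Set.range u) = ⊤)
    (g : EuclideanSpace ℝ (Fin n) → EuclideanSpace ℝ (Fin n))
    (hg : ∀ x, g x =
      ∑ i, (Real.exp (2 * ⟪u i, x⟫) / ∑ j, Real.exp (2 * ⟪u j, x⟫)) • u i) :
    Function.Injective g ∧
    Set.range g = interior (convexHull ℝ (Set.range u)) := by
  have hSpos : ∀ x : EuclideanSpace ℝ (Fin n), 0 < ∑ j, Real.exp (2 * ⟪u j, x⟫) :=
    fun x => Finset.sum_pos (fun i _ => Real.exp_pos _) Finset.univ_nonempty
  have hgi : ∀ x v : EuclideanSpace ℝ (Fin n), ⟪g x, v⟫ =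
      (∑ i, Real.exp (2 * ⟪u i, x⟫) * ⟪u i, v⟫) / (∑ j, Real.exp (2 * ⟪u j, x⟫)) := by
    intro x v
    rw [hg x, sum_inner]
    simp_rw [real_inner_smul_left, div_mul_eq_mul_div]
    rw [← Finset.sum_div]
  constructor
  · intro x y hgxy
    by_contra hne
    have hpos := st2_mono u hspan hne
    have h0 : (∑ i, Real.exp (2 * ⟪u i, x⟫) * ⟪u i, x - y⟫) / (∑ i, Real.exp (2 * ⟪u i, x⟫))
        - (∑ i, Real.exp (2 * ⟪u i, y⟫) * ⟪u i, x - y⟫) / (∑ i, Real.exp (2 * ⟪u i, y⟫)) = 0 := by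
      rw [← hgi x (x - y), ← hgi y (x - y), hgxy, sub_self]
    rw [h0] at hpos
    exact lt_irrefl _ hpos
  · apply Set.Subset.antisymm
    · rintro _ ⟨x, rfl⟩
      rw [hg x]
      apply st2_mem_interior u hspan
        (fun i => Real.exp (2 * ⟪u i, x⟫) / ∑ j, Real.exp (2 * ⟪u j, x⟫))
      · exact fun i => div_pos (Real.exp_pos _) (hSpos x)
      · rw [← Finset.sum_div]
        exact div_self (hSpos x).ne'
    · intro z hz
      obtain ⟨x, hx⟩ := st2_surj u hz
      exact ⟨x, by rw [hg x]; exact hx⟩
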